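/- Let γ > 0 and let K be an m×n real matrix such that γ(A − BK) is Schur stable. Let P be a symmetric positive definite matrix satisfying γ²(A − BK)ᵀP(A − BK) − P + Q + KᵀRK = 0, and define the updated gain K' = (BᵀPB + (1/γ²)R)⁻¹BᵀPA. Then γ(A − BK') is Schur stable. -/

import Mathlib

open Matrix
noncomputable section
namespace StabHelp

abbrev f : ℝ →+* ℂ := algebraMap ℝ ℂ

variable {a b : ℕ}

lemma map_smul' (c : ℝ) (M : Matrix (Fin a) (Fin b) ℝ) :
    (c • M).map f = (c : ℂ) • M.map f := by
  ext i j; simp [Matrix.map_apply]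

lemma conjT_map (M : Matrix (Fin a) (Fin b) ℝ) : (M.map f)ᴴ = (M.map f)ᵀ := by
  ext i j; simp [conjTranspose_apply, Matrix.map_apply]

lemma re_mulVec (M : Matrix (Fin a) (Fin b) ℝ) (x : Fin b → ℂ) :
    (fun i => ((M.map f *ᵥ x) i).re) = M *ᵥ (fun j => (x j).re) := by
  funext i
  simp [Matrix.mulVec, dotProduct, Complex.re_sum, Matrix.map_apply]

lemma im_mulVec (M : Matrix (Fin a) (Fin b) ℝ) (x : Fin b → ℂ) :
    (fun i => ((M.map f *ᵥ x) i).im) = M *ᵥ (fun j => (x j).im) := by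
  funext i
  simp only [Matrix.mulVec, dotProduct, Complex.im_sum]
  exact Finset.sum_congr rfl fun j _ => by simp [Matrix.map_apply, Complex.mul_im]

lemma map_sub' (M N : Matrix (Fin a) (Fin b) ℝ) :
    (M - N).map f = M.map f - N.map f :=
  Matrix.map_sub f (fun _ _ => by simp) M N

lemma key' {mm nn : ℕ} (W : Matrix (Fin nn) (Fin nn) ℝ) (T R : Matrix (Fin mm) (Fin mm) ℝ)
    (G : Matrix (Fin mm) (Fin nn) ℝ) (H : Matrix (Fin nn) (Fin mm) ℝ)
    (K K' : Matrix (Fin mm) (Fin nn) ℝ) (Kt K't : Matrix (Fin nn) (Fin mm) ℝ)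
    (h1 : (T + R) * K' = G) (h2 : K't * (T + R) = H) :
    (W - H * K - Kt * G + Kt * T * K) + Kt * R * K
      - ((W - H * K' - K't * G + K't * T * K') + K't * R * K')
      = (Kt - K't) * (T + R) * (K - K') := by
  rw [← h1, ← h2]
  simp only [Matrix.add_mul, Matrix.mul_add, Matrix.sub_mul, Matrix.mul_sub, Matrix.mul_assoc]
  abel

lemma quad_re (S : Matrix (Fin a) (Fin a) ℝ) (x : Fin a → ℂ) :
    (star x ⬝ᵥ (S.map f) *ᵥ x).re =
      (fun i => (x i).re) ⬝ᵥ S *ᵥ (fun i => (x i).re) +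
      (fun i => (x i).im) ⬝ᵥ S *ᵥ (fun i => (x i).im) := by
  simp only [dotProduct, Matrix.mulVec, Complex.re_sum]
  rw [← Finset.sum_add_distrib]
  refine Finset.sum_congr rfl fun i _ => ?_
  have h1 : (∑ j, (S.map f) i j * x j).re = ∑ j, S i j * (x j).re := by
    rw [Complex.re_sum]
    exact Finset.sum_congr rfl fun j _ => by simp [Matrix.map_apply, Complex.mul_re]
  have h2 : (∑ j, (S.map f) i j * x j).im = ∑ j, S i j * (x j).im := by
    rw [Complex.im_sum]
    exact Finset.sum_congr rfl fun j _ => by simp [Matrix.map_apply, Complex.mul_im]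
  rw [Complex.mul_re, h1, h2]
  simp [Finset.mul_sum]


lemma quad_re_nonneg {S : Matrix (Fin a) (Fin a) ℝ} (hS : S.PosSemidef) (x : Fin a → ℂ) :
    0 ≤ (star x ⬝ᵥ (S.map f) *ᵥ x).re := by
  rw [quad_re]
  have h1 := hS.dotProduct_mulVec_nonneg (fun i => (x i).re)
  have h2 := hS.dotProduct_mulVec_nonneg (fun i => (x i).im)
  simp only [star_trivial] at h1 h2
  linarith

lemma quad_re_pos {S : Matrix (Fin a) (Fin a) ℝ} (hS : S.PosDef) {x : Fin a → ℂ}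
    (hx : x ≠ 0) : 0 < (star x ⬝ᵥ (S.map f) *ᵥ x).re := by
  rw [quad_re]
  have hsd := hS.posSemidef
  have h1 := hsd.dotProduct_mulVec_nonneg (fun i => (x i).re)
  have h2 := hsd.dotProduct_mulVec_nonneg (fun i => (x i).im)
  simp only [star_trivial] at h1 h2
  have : (fun i => (x i).re) ≠ 0 ∨ (fun i => (x i).im) ≠ 0 := by
    by_contra h
    push_neg at h
    apply hx
    funext i
    have ha := congrFun h.1 i
    have hb := congrFun h.2 i
    simp only [Pi.zero_apply] at ha hb
    exact Complex.ext ha hb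
  rcases this with h | h
  · have := hS.dotProduct_mulVec_pos h; simp only [star_trivial] at this; linarith
  · have := hS.dotProduct_mulVec_pos h; simp only [star_trivial] at this; linarith

lemma quad_re_zero {S : Matrix (Fin a) (Fin a) ℝ} (hS : S.PosSemidef) {x : Fin a → ℂ}
    (h : (star x ⬝ᵥ (S.map f) *ᵥ x).re = 0) : (S.map f) *ᵥ x = 0 := by
  rw [quad_re] at h
  have h1 := hS.dotProduct_mulVec_nonneg (fun i => (x i).re)
  have h2 := hS.dotProduct_mulVec_nonneg (fun i => (x i).im)
  simp only [star_trivial] at h1 h2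
  have ha : (fun i => (x i).re) ⬝ᵥ S *ᵥ (fun i => (x i).re) = 0 := by linarith
  have hb : (fun i => (x i).im) ⬝ᵥ S *ᵥ (fun i => (x i).im) = 0 := by linarith
  rw [show (fun i => (x i).re) ⬝ᵥ S *ᵥ (fun i => (x i).re)
      = star (fun i => (x i).re) ⬝ᵥ S *ᵥ (fun i => (x i).re) from by rw [star_trivial]] at ha
  rw [show (fun i => (x i).im) ⬝ᵥ S *ᵥ (fun i => (x i).im)
      = star (fun i => (x i).im) ⬝ᵥ S *ᵥ (fun i => (x i).im) from by rw [star_trivial]] at hb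
  have ka := (hS.dotProduct_mulVec_zero_iff _).mp ha
  have kb := (hS.dotProduct_mulVec_zero_iff _).mp hb
  funext i
  have hre := congrFun (re_mulVec S x) i
  have him : (fun i => (((S.map f) *ᵥ x) i).im) = S *ᵥ (fun j => (x j).im) := by
    funext i
    simp only [Matrix.mulVec, dotProduct, Complex.im_sum]
    exact Finset.sum_congr rfl fun j _ => by simp [Matrix.map_apply, Complex.mul_im]
  have him' := congrFun him i
  refine Complex.ext ?_ ?_
  · rw [hre, ka]; rfl
  · rw [him', kb]; rfl

lemma posDef_smul {S : Matrix (Fin a) (Fin a) ℝ} (hS : S.PosDef) {c : ℝ} (hc : 0 < c) :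
    (c • S).PosDef := by
  constructor
  · have h := hS.1
    rw [Matrix.IsHermitian] at h ⊢
    rw [conjTranspose_smul, h]
    simp
  · exact (hS.smul hc).2

lemma exists_eigvec {M : Matrix (Fin a) (Fin a) ℝ} {μ : ℂ}
    (h : μ ∈ spectrum ℂ (M.map f)) :
    ∃ x : Fin a → ℂ, x ≠ 0 ∧ (M.map f) *ᵥ x = μ • x := by
  rw [spectrum.mem_iff] at h
  rw [Matrix.isUnit_iff_isUnit_det, isUnit_iff_ne_zero, not_not] at h
  obtain ⟨v, hv, hveq⟩ := (Matrix.exists_mulVec_eq_zero_iff).mpr h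
  refine ⟨v, hv, ?_⟩
  have : algebraMap ℂ (Matrix (Fin a) (Fin a) ℂ) μ = μ • (1 : Matrix (Fin a) (Fin a) ℂ) := by
    rw [Algebra.algebraMap_eq_smul_one]
  rw [this, Matrix.sub_mulVec, smul_mulVec, Matrix.one_mulVec, sub_eq_zero] at hveq
  exact hveq.symm

lemma quad_conj (M : Matrix (Fin a) (Fin b) ℝ) (S : Matrix (Fin a) (Fin a) ℝ)
    (x : Fin b → ℂ) :
    star x ⬝ᵥ ((Mᵀ * S * M).map f) *ᵥ x
      = star ((M.map f) *ᵥ x) ⬝ᵥ (S.map f) *ᵥ ((M.map f) *ᵥ x) := by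
  rw [Matrix.map_mul, Matrix.map_mul, Matrix.transpose_map]
  rw [← Matrix.mulVec_mulVec, ← Matrix.mulVec_mulVec]
  rw [Matrix.dotProduct_mulVec (star x), Matrix.star_mulVec, conjT_map, Matrix.mulVec_mulVec]

end StabHelp
end

open StabHelp

/-- A real square matrix is Schur stable if every eigenvalue of it, viewed as a
complex matrix, has modulus strictly less than `1`. -/
def SchurStable {n : ℕ} (M : Matrix (Fin n) (Fin n) ℝ) : Prop :=
  ∀ μ ∈ spectrum ℂ (M.map (algebraMap ℝ ℂ)), ‖μ‖ < 1

theorem stmt_5 {n m : ℕ}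
    (A : Matrix (Fin n) (Fin n) ℝ) (B : Matrix (Fin n) (Fin m) ℝ)
    (Q : Matrix (Fin n) (Fin n) ℝ) (R : Matrix (Fin m) (Fin m) ℝ)
    (hQ : Q.PosSemidef) (hR : R.PosDef)
    (hObs : ∀ x : Fin n → ℝ, (∀ k : ℕ, Q.mulVec ((A ^ k).mulVec x) = 0) → x = 0)
    (γ : ℝ) (hγ : 0 < γ)
    (K : Matrix (Fin m) (Fin n) ℝ)
    (hK : SchurStable (γ • (A - B * K)))
    (P : Matrix (Fin n) (Fin n) ℝ) (hPpos : P.PosDef)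
    (hP : γ ^ 2 • ((A - B * K)ᵀ * P * (A - B * K)) - P + Q + Kᵀ * R * K = 0)
    (K' : Matrix (Fin m) (Fin n) ℝ)
    (hK' : K' = (Bᵀ * P * B + (1 / γ ^ 2) • R)⁻¹ * (Bᵀ * P * A)) :
    SchurStable (γ • (A - B * K')) := by
  intro μ hμ
  obtain ⟨x, hx0, hxe⟩ := exists_eigvec hμ
  have hγ2 : (0:ℝ) < γ ^ 2 := by positivity
  have hPt : Pᵀ = P := by
    have h := hPpos.1
    rwa [Matrix.IsHermitian, conjTranspose_eq_transpose_of_trivial] at h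
  have hRt : Rᵀ = R := by
    have h := hR.1
    rwa [Matrix.IsHermitian, conjTranspose_eq_transpose_of_trivial] at h
  set P2 : Matrix (Fin n) (Fin n) ℝ := γ ^ 2 • P with hP2def
  have hP2pos : P2.PosDef := posDef_smul hPpos hγ2
  have hP2t : P2ᵀ = P2 := by rw [hP2def, transpose_smul, hPt]
  -- invertibility of the Riccati-type coefficient
  have hBPB : (Bᵀ * P * B).PosSemidef := by
    have h := hPpos.posSemidef.conjTranspose_mul_mul_same B
    rwa [conjTranspose_eq_transpose_of_trivial] at h
  have hS_pd : (Bᵀ * P * B + (1 / γ ^ 2) • R).PosDef :=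
    Matrix.PosDef.posSemidef_add hBPB (posDef_smul hR (by positivity))
  have hSunit : IsUnit (Bᵀ * P * B + (1 / γ ^ 2) • R).det :=
    (Matrix.isUnit_iff_isUnit_det _).mp hS_pd.isUnit
  have hSK' : (Bᵀ * P * B + (1 / γ ^ 2) • R) * K' = Bᵀ * P * A := by
    rw [hK', ← Matrix.mul_assoc, Matrix.mul_nonsing_inv _ hSunit, Matrix.one_mul]
  have h1 : (Bᵀ * P2 * B + R) * K' = Bᵀ * P2 * A := by
    have e : Bᵀ * P2 * B + R = γ ^ 2 • (Bᵀ * P * B + (1 / γ ^ 2) • R) := by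
      rw [smul_add, smul_smul, mul_one_div, div_self hγ2.ne', one_smul, hP2def,
        Matrix.mul_smul, Matrix.smul_mul]
    rw [e, Matrix.smul_mul, hSK', hP2def, Matrix.mul_smul, Matrix.smul_mul]
  have hS2t : (Bᵀ * P2 * B + R)ᵀ = Bᵀ * P2 * B + R := by
    simp [transpose_add, transpose_mul, hP2t, hRt, Matrix.mul_assoc]
  have h2 : K'ᵀ * (Bᵀ * P2 * B + R) = Aᵀ * P2 * B := by
    have h := congrArg Matrix.transpose h1
    rw [transpose_mul, hS2t] at h
    rw [h]
    simp [transpose_mul, hP2t, Matrix.mul_assoc]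
  -- the Lyapunov equation for K, rewritten with P2
  have hPC : (A - B * K)ᵀ * P2 * (A - B * K) = P - Q - Kᵀ * R * K := by
    have hs : (A - B * K)ᵀ * P2 * (A - B * K)
        = γ ^ 2 • ((A - B * K)ᵀ * P * (A - B * K)) := by
      rw [hP2def, Matrix.mul_smul, Matrix.smul_mul]
    rw [hs, ← sub_eq_zero]
    calc γ ^ 2 • ((A - B * K)ᵀ * P * (A - B * K)) - (P - Q - Kᵀ * R * K)
        = γ ^ 2 • ((A - B * K)ᵀ * P * (A - B * K)) - P + Q + Kᵀ * R * K := by abel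
      _ = 0 := hP
  -- expansions
  have e1 : (A - B * K)ᵀ * P2 * (A - B * K)
      = Aᵀ * P2 * A - (Aᵀ * P2 * B) * K - Kᵀ * (Bᵀ * P2 * A) + Kᵀ * (Bᵀ * P2 * B) * K := by
    simp only [transpose_sub, transpose_mul, Matrix.sub_mul, Matrix.mul_sub,
      Matrix.mul_assoc]
    abel
  have e2 : (A - B * K')ᵀ * P2 * (A - B * K')
      = Aᵀ * P2 * A - (Aᵀ * P2 * B) * K' - K'ᵀ * (Bᵀ * P2 * A) + K'ᵀ * (Bᵀ * P2 * B) * K' := by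
    simp only [transpose_sub, transpose_mul, Matrix.sub_mul, Matrix.mul_sub,
      Matrix.mul_assoc]
    abel
  have hdiff := key' (Aᵀ * P2 * A) (Bᵀ * P2 * B) R (Bᵀ * P2 * A) (Aᵀ * P2 * B)
    K K' Kᵀ K'ᵀ h1 h2
  have hsum : (A - B * K')ᵀ * P2 * (A - B * K') + K'ᵀ * R * K'
      = (A - B * K)ᵀ * P2 * (A - B * K) + Kᵀ * R * K
        - (Kᵀ - K'ᵀ) * (Bᵀ * P2 * B + R) * (K - K') := by
    rw [e1, e2, ← hdiff]; abel
  have hFinal : (A - B * K')ᵀ * P2 * (A - B * K')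
      = P - Q - K'ᵀ * R * K' - (K - K')ᵀ * (Bᵀ * P2 * B + R) * (K - K') := by
    rw [hPC] at hsum
    rw [transpose_sub]
    calc (A - B * K')ᵀ * P2 * (A - B * K')
        = ((A - B * K')ᵀ * P2 * (A - B * K') + K'ᵀ * R * K') - K'ᵀ * R * K' := by abel
      _ = (P - Q - Kᵀ * R * K + Kᵀ * R * K
            - (Kᵀ - K'ᵀ) * (Bᵀ * P2 * B + R) * (K - K')) - K'ᵀ * R * K' := by rw [hsum]
      _ = P - Q - K'ᵀ * R * K' - (Kᵀ - K'ᵀ) * (Bᵀ * P2 * B + R) * (K - K') := by abel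
  -- pass to quadratic forms over ℂ
  have hNx : ((A - B * K').map f) *ᵥ x = ((γ:ℂ)⁻¹ * μ) • x := by
    have h := hxe
    rw [map_smul', smul_mulVec] at h
    have hγc : (γ : ℂ) ≠ 0 := by exact_mod_cast hγ.ne'
    calc ((A - B * K').map f) *ᵥ x
        = (γ:ℂ)⁻¹ • ((γ:ℂ) • (((A - B * K').map f) *ᵥ x)) := by
          rw [smul_smul, inv_mul_cancel₀ hγc, one_smul]
      _ = (γ:ℂ)⁻¹ • (μ • x) := by rw [h]
      _ = ((γ:ℂ)⁻¹ * μ) • x := by rw [smul_smul]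
  set ν : ℂ := (γ:ℂ)⁻¹ * μ with hν
  -- quadratic form values
  set pP : ℝ := (star x ⬝ᵥ (P.map f) *ᵥ x).re with hpP
  set cQ : ℝ := (star x ⬝ᵥ (Q.map f) *ᵥ x).re with hcQ
  set yR : Fin m → ℂ := (K'.map f) *ᵥ x with hyR
  set cR : ℝ := (star yR ⬝ᵥ (R.map f) *ᵥ yR).re with hcR
  set yD : Fin m → ℂ := ((K - K').map f) *ᵥ x with hyD
  set cD : ℝ := (star yD ⬝ᵥ ((Bᵀ * P2 * B + R).map f) *ᵥ yD).re with hcD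
  have hform := congrArg (fun S : Matrix (Fin n) (Fin n) ℝ =>
    (star x ⬝ᵥ (S.map f) *ᵥ x).re) hFinal
  -- left side equals normSq μ * pP
  have hL : (star x ⬝ᵥ (((A - B * K')ᵀ * P2 * (A - B * K')).map f) *ᵥ x).re
      = Complex.normSq μ * pP := by
    rw [quad_conj, hNx]
    rw [star_smul, smul_dotProduct, Matrix.mulVec_smul, dotProduct_smul]
    rw [hP2def, map_smul', smul_mulVec, dotProduct_smul]
    simp only [smul_eq_mul, ← mul_assoc]
    have hsν : star ν * ν = (Complex.normSq ν : ℂ) := by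
      rw [Complex.star_def, mul_comm, Complex.mul_conj]
    have hc1 : (γ * γ)⁻¹ * γ ^ 2 = 1 := by
      rw [← pow_two]
      exact inv_mul_cancel₀ (by positivity)
    have hns : Complex.normSq ν * γ ^ 2 = Complex.normSq μ := by
      rw [hν, Complex.normSq_mul, Complex.normSq_inv, Complex.normSq_ofReal]
      rw [mul_comm ((γ * γ)⁻¹) _, mul_assoc, hc1, mul_one]
    rw [hsν, ← Complex.ofReal_mul, hns, Complex.re_ofReal_mul, ← hpP]

  -- right side decomposes
  have hRHS : (star x ⬝ᵥ ((P - Q - K'ᵀ * R * K'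
        - (K - K')ᵀ * (Bᵀ * P2 * B + R) * (K - K')).map f) *ᵥ x).re
      = pP - cQ - cR - cD := by
    rw [StabHelp.map_sub', StabHelp.map_sub', StabHelp.map_sub']
    simp only [Matrix.sub_mulVec, dotProduct_sub, Complex.sub_re]
    rw [quad_conj, quad_conj, ← hpP, ← hcQ, ← hyR, ← hyD, ← hcR, ← hcD]
  have heq := hform
  rw [hL, hRHS] at heq
  -- positivity facts
  have hpPpos : 0 < pP := quad_re_pos hPpos hx0
  have hcQ0 : 0 ≤ cQ := quad_re_nonneg hQ x
  have hcR0 : 0 ≤ cR := quad_re_nonneg hR.posSemidef yR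
  have hS2psd : (Bᵀ * P2 * B + R).PosSemidef := by
    have h := hP2pos.posSemidef.conjTranspose_mul_mul_same B
    rw [conjTranspose_eq_transpose_of_trivial] at h
    exact h.add hR.posSemidef
  have hcD0 : 0 ≤ cD := quad_re_nonneg hS2psd yD
  by_contra hcon
  push_neg at hcon
  have hn1 : 1 ≤ Complex.normSq μ := by
    rw [Complex.normSq_eq_norm_sq]
    exact one_le_pow₀ hcon
  have hple : pP ≤ Complex.normSq μ * pP := by
    have h := mul_le_mul_of_nonneg_right hn1 hpPpos.le
    rwa [one_mul] at h
  have hQ0 : cQ = 0 := by linarith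
  have hR0 : cR = 0 := by linarith
  -- the R-form vanishing forces K' x = 0
  have hyR0 : yR = 0 := by
    by_contra hy
    have h := quad_re_pos hR hy
    rw [← hcR] at h
    linarith
  -- the Q-form vanishing forces Q x = 0
  have hQx : (Q.map f) *ᵥ x = 0 := quad_re_zero hQ (by rw [← hcQ]; linarith)
  -- hence x is an eigenvector of A itself
  have hAx : (A.map f) *ᵥ x = ν • x := by
    have h := hNx
    rw [map_sub', Matrix.map_mul, Matrix.sub_mulVec, ← Matrix.mulVec_mulVec, ← hyR,
      hyR0, Matrix.mulVec_zero, sub_zero] at h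
    exact h
  have hpow : ∀ k : ℕ, ((A.map f) ^ k) *ᵥ x = ν ^ k • x := by
    intro k
    induction k with
    | zero => simp
    | succ k ih =>
      rw [pow_succ, pow_succ, ← Matrix.mulVec_mulVec, hAx, Matrix.mulVec_smul, ih,
        smul_smul, mul_comm]
  have hQAk : ∀ k : ℕ, (Q.map f) *ᵥ (((A ^ k).map f) *ᵥ x) = 0 := by
    intro k
    have hmapk : (A ^ k).map f = (A.map f) ^ k := by
      simpa using map_pow ((algebraMap ℝ ℂ).mapMatrix) A k
    rw [hmapk, hpow, Matrix.mulVec_smul, hQx, smul_zero]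
  -- take real and imaginary parts, use observability
  have hobs_a : ∀ k : ℕ, Q *ᵥ ((A ^ k) *ᵥ (fun i => (x i).re)) = 0 := by
    intro k
    have h1 := re_mulVec Q (((A ^ k).map f) *ᵥ x)
    rw [re_mulVec (A ^ k) x] at h1
    rw [← h1, hQAk k]
    funext i; simp
  have hobs_b : ∀ k : ℕ, Q *ᵥ ((A ^ k) *ᵥ (fun i => (x i).im)) = 0 := by
    intro k
    have h1 := im_mulVec Q (((A ^ k).map f) *ᵥ x)
    rw [im_mulVec (A ^ k) x] at h1
    rw [← h1, hQAk k]
    funext i; simp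
  have hxa := hObs _ hobs_a
  have hxb := hObs _ hobs_b
  apply hx0
  funext i
  have ha := congrFun hxa i
  have hb := congrFun hxb i
  simp only [Pi.zero_apply] at ha hb
  exact Complex.ext ha hb
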